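/- For α > 0, the function f(σ) = ∫₀^∞ e^{-σ(cosh θ - 1)} (sinh θ)^α dθ satisfies f(σ) = σ^{-α} Γ(α)(1 + o(1)) as σ → 0⁺. -/

import Mathlib

open Real MeasureTheory Set Filter

lemma aux_subst (α σ : ℝ) (hσ : 0 < σ) :
    ∫ t in Ioi (0:ℝ), Real.exp (-t) * (t^2 + 2*σ*t) ^ ((α-1)/2)
      = σ ^ α * ∫ θ in Ioi (0:ℝ), Real.exp (-σ * (Real.cosh θ - 1)) * Real.sinh θ ^ α := by
  set φ : ℝ → ℝ := fun θ => σ * (Real.cosh θ - 1) with hφ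
  have himg : φ '' Ioi 0 = Ioi 0 := by
    ext t
    constructor
    · rintro ⟨θ, hθ, rfl⟩
      have h1 : 1 < Real.cosh θ := Real.one_lt_cosh.2 (ne_of_gt hθ)
      have : 0 < φ θ := by simp only [hφ]; nlinarith
      simpa using this
    · intro ht
      have ht' : (0:ℝ) < t := ht
      have hc : (1:ℝ) < 1 + t/σ := by
        have : 0 < t/σ := div_pos ht' hσ
        linarith
      refine ⟨Real.arsinh (Real.sqrt ((1 + t/σ)^2 - 1)), ?_, ?_⟩
      · have : 0 < Real.sqrt ((1 + t/σ)^2 - 1) := by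
          apply Real.sqrt_pos.2; nlinarith
        exact Real.arsinh_pos_iff.2 this
      · have hsq : Real.sqrt ((1 + t/σ)^2 - 1) ^ 2 = (1 + t/σ)^2 - 1 :=
          Real.sq_sqrt (by nlinarith)
        have hco : Real.cosh (Real.arsinh (Real.sqrt ((1 + t/σ)^2 - 1))) = 1 + t/σ := by
          rw [Real.cosh_arsinh, hsq]
          have : (1 : ℝ) + ((1 + t/σ)^2 - 1) = (1 + t/σ)^2 := by ring
          rw [this, Real.sqrt_sq (by linarith)]
        simp only [hφ, hco]
        field_simp
        ring
  have hderiv : ∀ θ ∈ Ioi (0:ℝ), HasDerivWithinAt φ (σ * Real.sinh θ) (Ioi 0) θ := by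
    intro θ _
    exact (((Real.hasDerivAt_cosh θ).sub_const 1).const_mul σ).hasDerivWithinAt
  have hinj : InjOn φ (Ioi 0) := by
    intro a ha b hb hab
    have : Real.cosh a = Real.cosh b := by
      have := mul_left_cancel₀ (ne_of_gt hσ) hab
      linarith
    exact Real.cosh_strictMonoOn.injOn (mem_Ici.2 (le_of_lt ha)) (mem_Ici.2 (le_of_lt hb)) this
  calc ∫ t in Ioi (0:ℝ), Real.exp (-t) * (t^2 + 2*σ*t) ^ ((α-1)/2)
      = ∫ t in φ '' Ioi 0, Real.exp (-t) * (t^2 + 2*σ*t) ^ ((α-1)/2) := by rw [himg]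
    _ = ∫ θ in Ioi (0:ℝ), |σ * Real.sinh θ| •
          (Real.exp (-(φ θ)) * ((φ θ)^2 + 2*σ*(φ θ)) ^ ((α-1)/2)) :=
        integral_image_eq_integral_abs_deriv_smul measurableSet_Ioi hderiv hinj _
    _ = ∫ θ in Ioi (0:ℝ), σ ^ α * (Real.exp (-σ * (Real.cosh θ - 1)) * Real.sinh θ ^ α) := by
        apply setIntegral_congr_fun measurableSet_Ioi
        intro θ hθ
        have hs : 0 < Real.sinh θ := Real.sinh_pos_iff.2 hθ
        have hss : 0 < σ * Real.sinh θ := mul_pos hσ hs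
        have hbase : (φ θ)^2 + 2*σ*(φ θ) = (σ * Real.sinh θ)^2 := by
          have := Real.cosh_sq θ
          simp only [hφ]; linear_combination (σ^2) * this
        have hrw : ((σ * Real.sinh θ)^2 : ℝ) ^ ((α-1)/2) = (σ * Real.sinh θ) ^ (α-1) := by
          rw [← Real.rpow_natCast (σ * Real.sinh θ) 2, ← Real.rpow_mul (le_of_lt hss)]
          rw [show ((2:ℕ):ℝ) * ((α-1)/2) = α-1 by push_cast; ring]
        have hφθ : -(φ θ) = -σ * (Real.cosh θ - 1) := by simp only [hφ]; ring
        dsimp only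
        rw [smul_eq_mul, hbase, hrw, hφθ, abs_of_pos hss]
        rw [show σ * Real.sinh θ * (Real.exp (-σ * (Real.cosh θ - 1)) * (σ * Real.sinh θ) ^ (α-1))
            = (σ * Real.sinh θ) * (σ * Real.sinh θ) ^ (α-1) * Real.exp (-σ * (Real.cosh θ - 1)) by ring]
        rw [show (σ * Real.sinh θ) * (σ * Real.sinh θ) ^ (α-1)
            = (σ * Real.sinh θ) ^ (1:ℝ) * (σ * Real.sinh θ) ^ (α-1) by rw [Real.rpow_one]]
        rw [← Real.rpow_add hss]
        rw [show (1 + (α-1)) = α by ring, Real.mul_rpow (le_of_lt hσ) (le_of_lt hs)]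
        ring
    _ = σ ^ α * ∫ θ in Ioi (0:ℝ), Real.exp (-σ * (Real.cosh θ - 1)) * Real.sinh θ ^ α :=
        MeasureTheory.integral_const_mul _ _

set_option maxHeartbeats 1000000 in
theorem stmt2 (α : ℝ) (hα : 0 < α) (f : ℝ → ℝ)
    (hf : ∀ σ : ℝ, f σ =
      ∫ θ in Ioi (0:ℝ), Real.exp (-σ * (Real.cosh θ - 1)) * Real.sinh θ ^ α) :
    ∀ ε : ℝ, 0 < ε → ∃ σ₀ : ℝ, 0 < σ₀ ∧ ∀ σ : ℝ, 0 < σ → σ < σ₀ →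
      |f σ * σ ^ α / Real.Gamma α - 1| ≤ ε := by
  intro ε hε
  have hΓ : 0 < Real.Gamma α := Real.Gamma_pos_of_pos hα
  have hc : 0 < ε * α * Real.Gamma α := by positivity
  refine ⟨min (Real.log (1+ε)) ((ε * α * Real.Gamma α) ^ (1/α)), lt_min
    (Real.log_pos (by linarith)) (Real.rpow_pos_of_pos hc _), ?_⟩
  intro σ hσ hσ₀
  have heσ : Real.exp σ ≤ 1 + ε := by
    have h1 := lt_of_lt_of_le hσ₀ (min_le_left _ _)
    have := Real.exp_lt_exp.2 h1
    rw [Real.exp_log (by linarith)] at this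
    linarith
  have hsα : σ ^ α ≤ ε * α * Real.Gamma α := by
    have h1 := lt_of_lt_of_le hσ₀ (min_le_right _ _)
    have h2 : σ ^ α < ((ε * α * Real.Gamma α) ^ (1/α)) ^ α :=
      Real.rpow_lt_rpow (le_of_lt hσ) h1 hα
    rw [← Real.rpow_mul (le_of_lt hc), one_div, inv_mul_cancel₀ (ne_of_gt hα),
      Real.rpow_one] at h2
    linarith
  -- the transformed integral
  obtain ⟨I, hIdef⟩ : ∃ I : ℝ, I = ∫ t in Ioi (0:ℝ), Real.exp (-t) * (t^2 + 2*σ*t) ^ ((α-1)/2) :=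
    ⟨_, rfl⟩
  have hI : f σ * σ ^ α = I := by
    rw [hf σ, hIdef, aux_subst α σ hσ]; ring
  -- Gamma integral facts
  set G : ℝ → ℝ := fun t => Real.exp (-t) * t ^ (α-1) with hGdef
  have hGint : IntegrableOn G (Ioi 0) := Real.GammaIntegral_convergent hα
  have hΓeq : Real.Gamma α = ∫ t in Ioi (0:ℝ), G t := Real.Gamma_eq_integral hα
  -- the shifted function h₁
  set H : ℝ → ℝ := fun t => Real.exp (-t) * (t+σ) ^ (α-1) with hHdef
  have hHG : ∀ t : ℝ, H t = Real.exp σ * G (t+σ) := by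
    intro t
    simp only [hHdef, hGdef]
    rw [neg_add, Real.exp_add, Real.exp_neg σ]
    field_simp
  have himg : (fun x => x + σ) '' Ioi (0:ℝ) = Ioi σ := by
    rw [image_add_const_Ioi, zero_add]
  have hderiv : ∀ x ∈ Ioi (0:ℝ), HasDerivWithinAt (fun x => x + σ) ((fun _ : ℝ => (1:ℝ)) x) (Ioi 0) x :=
    fun x _ => ((hasDerivAt_id x).add_const σ).hasDerivWithinAt
  have hinj : InjOn (fun x => x + σ) (Ioi (0:ℝ)) := fun a _ b _ h => by simpa using h
  have hshift : ∫ s in Ioi σ, G s = ∫ t in Ioi (0:ℝ), G (t+σ) := by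
    rw [← himg, integral_image_eq_integral_abs_deriv_smul measurableSet_Ioi hderiv hinj]
    simp
  have hGσint : IntegrableOn G (Ioi σ) := hGint.mono_set (Ioi_subset_Ioi (le_of_lt hσ))
  have hGshiftint : IntegrableOn (fun t => G (t+σ)) (Ioi (0:ℝ)) := by
    have := (integrableOn_image_iff_integrableOn_abs_deriv_smul measurableSet_Ioi hderiv hinj G).1
      (by rwa [himg])
    simpa using this
  have hHint : IntegrableOn H (Ioi (0:ℝ)) := by
    have : IntegrableOn (fun t => Real.exp σ * G (t+σ)) (Ioi (0:ℝ)) := hGshiftint.const_mul _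
    exact this.congr_fun (fun t _ => (hHG t).symm) measurableSet_Ioi
  have hHval : ∫ t in Ioi (0:ℝ), H t = Real.exp σ * ∫ s in Ioi σ, G s := by
    rw [hshift, ← MeasureTheory.integral_const_mul]
    exact setIntegral_congr_fun measurableSet_Ioi (fun t _ => hHG t)
  -- J : integral over (0, σ]
  obtain ⟨J, hJdef⟩ : ∃ J : ℝ, J = ∫ t in Ioc (0:ℝ) σ, G t := ⟨_, rfl⟩
  have hJ0 : 0 ≤ J := hJdef ▸ setIntegral_nonneg measurableSet_Ioc (fun t ht => by
    have : (0:ℝ) < t := ht.1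
    positivity)
  have hsplit : J + ∫ s in Ioi σ, G s = Real.Gamma α := by
    rw [hΓeq, hJdef, ← MeasureTheory.setIntegral_union (Ioc_disjoint_Ioi le_rfl) measurableSet_Ioi
      (hGint.mono_set Ioc_subset_Ioi_self) hGσint, Ioc_union_Ioi_eq_Ioi (le_of_lt hσ)]
  have hrpowint : IntegrableOn (fun t : ℝ => t ^ (α-1)) (Ioc (0:ℝ) σ) :=
    (intervalIntegral.intervalIntegrable_rpow' (by linarith : (-1:ℝ) < α - 1)).1
  have hJle : J ≤ σ ^ α / α := by
    have h1 : J ≤ ∫ t in Ioc (0:ℝ) σ, t ^ (α-1) := by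
      rw [hJdef]
      apply setIntegral_mono_on (hGint.mono_set Ioc_subset_Ioi_self) hrpowint measurableSet_Ioc
      intro t ht
      have ht0 : (0:ℝ) < t := ht.1
      have : Real.exp (-t) ≤ 1 := Real.exp_le_one_iff.2 (by linarith)
      simp only [hGdef]
      nlinarith [Real.rpow_nonneg (le_of_lt ht0) (α-1)]
    have h2 : ∫ t in Ioc (0:ℝ) σ, t ^ (α-1) = σ ^ α / α := by
      rw [← intervalIntegral.integral_of_le (le_of_lt hσ),
        integral_rpow (Or.inl (by linarith : (-1:ℝ) < α - 1))]
      rw [show α - 1 + 1 = α by ring, Real.zero_rpow (ne_of_gt hα)]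
      ring
    linarith
  -- integrand measurable
  have hmeas : AEStronglyMeasurable (fun t : ℝ => Real.exp (-t) * (t^2 + 2*σ*t) ^ ((α-1)/2))
      (volume.restrict (Ioi 0)) := by
    refine ContinuousOn.aestronglyMeasurable ?_ measurableSet_Ioi
    refine ((Continuous.continuousOn (by continuity)).mul
      ((((continuous_pow 2).add (continuous_const.mul continuous_id)).continuousOn).rpow_const ?_))
    intro t ht
    have ht0 : (0:ℝ) < t := ht
    exact Or.inl (by simp only [Pi.add_apply, Pi.mul_apply, id_eq]; nlinarith)
  -- pointwise rewrites
  have hGt : ∀ t ∈ Ioi (0:ℝ), G t = Real.exp (-t) * (t^2) ^ ((α-1)/2) := by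
    intro t ht
    have ht0 : (0:ℝ) < t := ht
    simp only [hGdef]
    congr 1
    rw [← Real.rpow_natCast t 2, ← Real.rpow_mul (le_of_lt ht0)]
    rw [show ((2:ℕ):ℝ) * ((α-1)/2) = α-1 by push_cast; ring]
  have hHt : ∀ t ∈ Ioi (0:ℝ), H t = Real.exp (-t) * ((t+σ)^2) ^ ((α-1)/2) := by
    intro t ht
    have ht0 : (0:ℝ) < t := ht
    simp only [hHdef]
    congr 1
    rw [← Real.rpow_natCast (t+σ) 2, ← Real.rpow_mul (by linarith)]
    rw [show ((2:ℕ):ℝ) * ((α-1)/2) = α-1 by push_cast; ring]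
  have hIoiσ : ∫ s in Ioi σ, G s = Real.Gamma α - J := by linarith
  have hIoiσ0 : 0 ≤ ∫ s in Ioi σ, G s := setIntegral_nonneg measurableSet_Ioi (fun t ht => by
    have ht0 : (0:ℝ) < t := lt_trans hσ ht
    simp only [hGdef]; positivity)
  have hexp1 : 1 ≤ Real.exp σ := Real.one_le_exp (le_of_lt hσ)
  have hexp0 : 0 ≤ Real.exp σ := le_trans zero_le_one hexp1
  -- integrability of the integrand
  have hIint : IntegrableOn (fun t : ℝ => Real.exp (-t) * (t^2 + 2*σ*t) ^ ((α-1)/2)) (Ioi 0) := by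
    apply Integrable.mono' (hGint.add hHint) hmeas
    filter_upwards [ae_restrict_mem measurableSet_Ioi] with t ht
    have ht0 : (0:ℝ) < t := ht
    have hb1 : (0:ℝ) < t^2 := by positivity
    have hb2 : t^2 ≤ t^2 + 2*σ*t := by nlinarith
    have hb3 : t^2 + 2*σ*t ≤ (t+σ)^2 := by nlinarith
    have he : (0:ℝ) < Real.exp (-t) := Real.exp_pos _
    have hG0 : 0 ≤ G t := by simp only [hGdef]; positivity
    have hH0 : 0 ≤ H t := by
      simp only [hHdef]
      have : (0:ℝ) < t + σ := by linarith
      positivity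
    rw [Real.norm_eq_abs, abs_of_nonneg (by positivity), Pi.add_apply]
    rcases le_or_gt 1 α with h1 | h1
    · have e2 : (t^2 + 2*σ*t) ^ ((α-1)/2) ≤ ((t+σ)^2) ^ ((α-1)/2) :=
        Real.rpow_le_rpow (by nlinarith) hb3 (by linarith)
      have : Real.exp (-t) * (t^2 + 2*σ*t) ^ ((α-1)/2) ≤ H t := by
        rw [hHt t ht]; nlinarith
      linarith
    · have e1 : (t^2 + 2*σ*t) ^ ((α-1)/2) ≤ (t^2) ^ ((α-1)/2) :=
        Real.rpow_le_rpow_of_nonpos hb1 hb2 (by linarith)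
      have : Real.exp (-t) * (t^2 + 2*σ*t) ^ ((α-1)/2) ≤ G t := by
        rw [hGt t ht]; nlinarith
      linarith
  -- bounds on I
  have hHup : ∫ t in Ioi (0:ℝ), H t = Real.exp σ * (Real.Gamma α - J) := by
    rw [hHval, hIoiσ]
  have hfinal : (1-ε) * Real.Gamma α ≤ I ∧ I ≤ (1+ε) * Real.Gamma α := by
    rcases le_or_gt 1 α with h1 | h1
    · have hlow : Real.Gamma α ≤ I := by
        rw [hΓeq, hIdef]
        apply setIntegral_mono_on hGint hIint measurableSet_Ioi
        intro t ht
        have ht0 : (0:ℝ) < t := ht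
        have hb1 : (0:ℝ) < t^2 := by positivity
        have hb2 : t^2 ≤ t^2 + 2*σ*t := by nlinarith
        have he : (0:ℝ) < Real.exp (-t) := Real.exp_pos _
        have e1 : (t^2) ^ ((α-1)/2) ≤ (t^2 + 2*σ*t) ^ ((α-1)/2) :=
          Real.rpow_le_rpow (le_of_lt hb1) hb2 (by linarith)
        rw [hGt t ht]; nlinarith
      have hup : I ≤ ∫ t in Ioi (0:ℝ), H t := by
        rw [hIdef]
        apply setIntegral_mono_on hIint hHint measurableSet_Ioi
        intro t ht
        have ht0 : (0:ℝ) < t := ht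
        have hb3 : t^2 + 2*σ*t ≤ (t+σ)^2 := by nlinarith
        have he : (0:ℝ) < Real.exp (-t) := Real.exp_pos _
        have e2 : (t^2 + 2*σ*t) ^ ((α-1)/2) ≤ ((t+σ)^2) ^ ((α-1)/2) :=
          Real.rpow_le_rpow (by nlinarith) hb3 (by linarith)
        rw [hHt t ht]; nlinarith
      constructor
      · nlinarith
      · rw [hHup] at hup
        nlinarith
    · have hup : I ≤ Real.Gamma α := by
        rw [hΓeq, hIdef]
        apply setIntegral_mono_on hIint hGint measurableSet_Ioi
        intro t ht
        have ht0 : (0:ℝ) < t := ht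
        have hb1 : (0:ℝ) < t^2 := by positivity
        have hb2 : t^2 ≤ t^2 + 2*σ*t := by nlinarith
        have he : (0:ℝ) < Real.exp (-t) := Real.exp_pos _
        have e1 : (t^2 + 2*σ*t) ^ ((α-1)/2) ≤ (t^2) ^ ((α-1)/2) :=
          Real.rpow_le_rpow_of_nonpos hb1 hb2 (by linarith)
        rw [hGt t ht]; nlinarith
      have hlow : ∫ t in Ioi (0:ℝ), H t ≤ I := by
        rw [hIdef]
        apply setIntegral_mono_on hHint hIint measurableSet_Ioi
        intro t ht
        have ht0 : (0:ℝ) < t := ht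
        have hb3 : t^2 + 2*σ*t ≤ (t+σ)^2 := by nlinarith
        have he : (0:ℝ) < Real.exp (-t) := Real.exp_pos _
        have e2 : ((t+σ)^2) ^ ((α-1)/2) ≤ (t^2 + 2*σ*t) ^ ((α-1)/2) :=
          Real.rpow_le_rpow_of_nonpos (by nlinarith) hb3 (by linarith)
        rw [hHt t ht]; nlinarith
      have hJε : J ≤ ε * Real.Gamma α := by
        have : σ ^ α / α ≤ ε * Real.Gamma α := by
          rw [div_le_iff₀ hα]; nlinarith
        linarith
      rw [hHup] at hlow
      constructor
      · nlinarith
      · nlinarith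
  rw [hI]
  have : |I / Real.Gamma α - 1| = |I - Real.Gamma α| / Real.Gamma α := by
    rw [show I / Real.Gamma α - 1 = (I - Real.Gamma α) / Real.Gamma α from by field_simp,
      abs_div, abs_of_pos hΓ]
  rw [this, div_le_iff₀ hΓ, abs_le]
  constructor
  · nlinarith [hfinal.1]
  · nlinarith [hfinal.2]
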